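/- The set ℝ − ℤ of real numbers that are not integers, regarded as a subset of the constant polynomials in ℝ[z], is Diophantine over ℝ[z]. -/

import Mathlib

/-- A set `X ⊆ R^n` is *Diophantine* over `R` if there are finitely many polynomials
`F₁, …, F_r ∈ R[x₁,…,x_n,y₁,…,y_m]` such that `X` is the set of `a ∈ R^n` for which the
system `F_j(a, b) = 0` (for all `j`) has a solution `b ∈ R^m`. -/
def IsDiophantine {R : Type*} [CommRing R] {n : ℕ} (X : Set (Fin n → R)) : Prop :=
  ∃ (m r : ℕ) (F : Fin r → MvPolynomial (Fin n ⊕ Fin m) R),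
    ∀ a : Fin n → R, a ∈ X ↔
      ∃ b : Fin m → R, ∀ j : Fin r, MvPolynomial.eval (Sum.elim a b) (F j) = 0

/-- A set `X ⊆ R` is Diophantine over `R` (one-variable case of `IsDiophantine`). -/
def IsDiophantine1 {R : Type*} [CommRing R] (X : Set R) : Prop :=
  ∃ (m r : ℕ) (F : Fin r → MvPolynomial (Fin 1 ⊕ Fin m) R),
    ∀ a : R, a ∈ X ↔
      ∃ b : Fin m → R, ∀ j : Fin r, MvPolynomial.eval (Sum.elim (fun _ => a) b) (F j) = 0

/-- A set `X ⊆ R²` is Diophantine over `R` (two-variable case of `IsDiophantine`). -/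
def IsDiophantine2 {R : Type*} [CommRing R] (X : Set (R × R)) : Prop :=
  ∃ (m r : ℕ) (F : Fin r → MvPolynomial (Fin 2 ⊕ Fin m) R),
    ∀ a : R × R, a ∈ X ↔
      ∃ b : Fin m → R, ∀ j : Fin r, MvPolynomial.eval (Sum.elim ![a.1, a.2] b) (F j) = 0

section Aux
open Polynomial

lemma pell_key : ∀ (k : ℕ) (Y P : ℝ[X]), Y.natDegree < k →
    P^2 - (X^2 - 1)*Y^2 = 1 → ∃ n : ℤ, Y.eval 1 = (n : ℝ) := by
  intro k
  induction k with
  | zero => intro Y P h; omega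
  | succ k ih =>
    intro Y P hdeg h
    by_cases hY : Y = 0
    · exact ⟨0, by simp [hY]⟩
    set A := P - X * Y with hA
    set B := P + X * Y with hB
    have hAB : A * B = 1 - Y^2 := by rw [hA, hB]; linear_combination h
    by_cases h1 : (1 : ℝ[X]) - Y^2 = 0
    · have hfac : (1 - Y) * (1 + Y) = 0 := by linear_combination h1
      rcases mul_eq_zero.mp hfac with h2 | h2
      · exact ⟨1, by have hy : Y = 1 := by linear_combination -h2
                     simp [hy]⟩
      · exact ⟨-1, by have hy : Y = -1 := by linear_combination h2
                      simp [hy]⟩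
    · have hA0 : A ≠ 0 := fun h' => h1 (by rw [← hAB, h', zero_mul])
      have hB0 : B ≠ 0 := fun h' => h1 (by rw [← hAB, h', mul_zero])
      have hsum := Polynomial.natDegree_mul hA0 hB0
      rw [hAB] at hsum
      have hYsq : (1 - Y^2).natDegree ≤ 2 * Y.natDegree := by
        have := Polynomial.natDegree_sub_le (1 : ℝ[X]) (Y^2)
        simpa [Polynomial.natDegree_pow, Nat.mul_comm] using this
      have hBA : B - A = 2 * (X * Y) := by rw [hA, hB]; ring
      have hXY : (X * Y).natDegree = 1 + Y.natDegree := by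
        rw [Polynomial.natDegree_mul Polynomial.X_ne_zero hY, Polynomial.natDegree_X]
      have h2XY : ((2 : ℝ[X]) * (X * Y)).natDegree = 1 + Y.natDegree := by
        rw [Polynomial.natDegree_mul (by norm_num) (mul_ne_zero Polynomial.X_ne_zero hY), hXY]
        simp
      have hmax : Y.natDegree + 1 ≤ max B.natDegree A.natDegree := by
        have := Polynomial.natDegree_sub_le B A
        rw [hBA, h2XY] at this
        omega
      have hX1 : (P.eval 1) = 1 ∨ (P.eval 1) = -1 := by
        simpa using congrArg (Polynomial.eval 1) h
      rcases le_max_iff.mp hmax with hbig | hbig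
      · -- B big, A small : descent with Y' = X*Y - P = -A
        have hAsmall : A.natDegree < Y.natDegree := by omega
        have hpell' : (X*P - (X^2-1)*Y)^2 - (X^2-1)*(X*Y - P)^2 = 1 := by
          linear_combination h
        have hdeg' : (X*Y - P).natDegree < k := by
          have : (X*Y - P).natDegree = A.natDegree := by
            rw [show X*Y - P = -A by rw [hA]; ring, Polynomial.natDegree_neg]
          omega
        obtain ⟨n, hn⟩ := ih (X*Y - P) (X*P - (X^2-1)*Y) hdeg' hpell'
        simp at hn
        rcases hX1 with hp | hp
        · exact ⟨n + 1, by push_cast; linarith⟩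
        · exact ⟨n - 1, by push_cast; linarith⟩
      · -- A big, B small : descent with Y'' = X*Y + P = B
        have hBsmall : B.natDegree < Y.natDegree := by omega
        have hpell' : (X*P + (X^2-1)*Y)^2 - (X^2-1)*(X*Y + P)^2 = 1 := by
          linear_combination h
        have hdeg' : (X*Y + P).natDegree < k := by
          have : (X*Y + P).natDegree = B.natDegree := by
            rw [show X*Y + P = B by rw [hB]; ring]
          omega
        obtain ⟨n, hn⟩ := ih (X*Y + P) (X*P + (X^2-1)*Y) hdeg' hpell'
        simp at hn
        rcases hX1 with hp | hp
        · exact ⟨n - 1, by push_cast; linarith⟩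
        · exact ⟨n + 1, by push_cast; linarith⟩

noncomputable def pellSeq : ℕ → ℝ[X] × ℝ[X] :=
  fun n => Nat.rec (1, 0) (fun _ p => (X * p.1 + (X^2 - 1) * p.2, X * p.2 + p.1)) n

lemma pellSeq_zero : pellSeq 0 = (1, 0) := rfl

lemma pellSeq_succ (n : ℕ) : pellSeq (n+1) =
    (X * (pellSeq n).1 + (X^2 - 1) * (pellSeq n).2, X * (pellSeq n).2 + (pellSeq n).1) := rfl

lemma pellSeq_pell (n : ℕ) : (pellSeq n).1^2 - (X^2 - 1)*(pellSeq n).2^2 = 1 := by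
  induction n with
  | zero => rw [pellSeq_zero]; ring
  | succ n ih => rw [pellSeq_succ]; dsimp only; linear_combination ih

lemma pellSeq_fst_eval (n : ℕ) : (pellSeq n).1.eval 1 = 1 := by
  induction n with
  | zero => rw [pellSeq_zero]; simp
  | succ n ih => rw [pellSeq_succ]; simp [ih]

lemma pellSeq_snd_eval (n : ℕ) : (pellSeq n).2.eval 1 = n := by
  induction n with
  | zero => rw [pellSeq_zero]; simp
  | succ n ih => rw [pellSeq_succ]; simp [ih, pellSeq_fst_eval]

lemma pell_main (Y P : ℝ[X]) (h : P^2 - (X^2 - 1)*Y^2 = 1) : ∃ n : ℤ, Y.eval 1 = (n : ℝ) :=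
  pell_key (Y.natDegree + 1) Y P (by omega) h

lemma pell_exists (n : ℤ) : ∃ P Q : ℝ[X], P^2 - (X^2 - 1)*Q^2 = 1 ∧ Q.eval 1 = n := by
  rcases le_or_gt 0 n with hn | hn
  · exact ⟨(pellSeq n.toNat).1, (pellSeq n.toNat).2, pellSeq_pell _, by
      rw [pellSeq_snd_eval]; norm_cast; omega⟩
  · refine ⟨(pellSeq (-n).toNat).1, -(pellSeq (-n).toNat).2, by
      have := pellSeq_pell (-n).toNat; linear_combination this, ?_⟩
    rw [Polynomial.eval_neg, pellSeq_snd_eval]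
    norm_cast
    omega

def mk7 {α : Type*} (x0 x1 x2 x3 x4 x5 x6 : α) : Fin 7 → α
  | ⟨0, _⟩ => x0
  | ⟨1, _⟩ => x1
  | ⟨2, _⟩ => x2
  | ⟨3, _⟩ => x3
  | ⟨4, _⟩ => x4
  | ⟨5, _⟩ => x5
  | ⟨6, _⟩ => x6

def mk9 {α : Type*} (x0 x1 x2 x3 x4 x5 x6 x7 x8 : α) : Fin 9 → α
  | ⟨0, _⟩ => x0
  | ⟨1, _⟩ => x1
  | ⟨2, _⟩ => x2
  | ⟨3, _⟩ => x3
  | ⟨4, _⟩ => x4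
  | ⟨5, _⟩ => x5
  | ⟨6, _⟩ => x6
  | ⟨7, _⟩ => x7
  | ⟨8, _⟩ => x8

theorem real_sub_int_diophantine' :
    ∃ (m r : ℕ) (F : Fin r → MvPolynomial (Fin 1 ⊕ Fin m) (Polynomial ℝ)),
    ∀ a : Polynomial ℝ, a ∈ {f : Polynomial ℝ | ∃ a : ℝ, f = Polynomial.C a ∧ ¬ ∃ n : ℤ, a = (n : ℝ)} ↔
      ∃ b : Fin m → Polynomial ℝ, ∀ j : Fin r,
        MvPolynomial.eval (Sum.elim (fun _ => a) b) (F j) = 0 := by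
  classical
  refine ⟨9, 7, mk7
    (MvPolynomial.X (Sum.inl 0) * (MvPolynomial.X (Sum.inl 0) * MvPolynomial.X (Sum.inr 0) - 1))
    (MvPolynomial.X (Sum.inr 2)^2
      - (MvPolynomial.C Polynomial.X^2 - 1) * MvPolynomial.X (Sum.inr 3)^2 - 1)
    (MvPolynomial.X (Sum.inr 3) - MvPolynomial.X (Sum.inr 1)
      - (MvPolynomial.C Polynomial.X - 1) * MvPolynomial.X (Sum.inr 4))
    (MvPolynomial.X (Sum.inl 0) - MvPolynomial.X (Sum.inr 1) - MvPolynomial.X (Sum.inr 5)^2)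
    (MvPolynomial.X (Sum.inr 5) * MvPolynomial.X (Sum.inr 6) - 1)
    (1 - (MvPolynomial.X (Sum.inl 0) - MvPolynomial.X (Sum.inr 1)) - MvPolynomial.X (Sum.inr 7)^2)
    (MvPolynomial.X (Sum.inr 7) * MvPolynomial.X (Sum.inr 8) - 1), fun f => ?_⟩
  constructor
  · rintro ⟨a, rfl, hna⟩
    have ha0 : a ≠ 0 := fun h => hna ⟨0, by simp [h]⟩
    set n : ℤ := ⌊a⌋ with hn
    have hlt : (n : ℝ) < a := lt_of_le_of_ne (Int.floor_le a) (fun h => hna ⟨n, h.symm⟩)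
    have hlt2 : a < n + 1 := Int.lt_floor_add_one a
    have hs1 : Real.sqrt (a - n) ^ 2 = a - n := Real.sq_sqrt (by linarith)
    have hs2 : Real.sqrt (1 - (a - n)) ^ 2 = 1 - (a - n) := Real.sq_sqrt (by linarith)
    have hs1' : Real.sqrt (a - n) ≠ 0 := by
      intro h; rw [h] at hs1; nlinarith
    have hs2' : Real.sqrt (1 - (a - n)) ≠ 0 := by
      intro h; rw [h] at hs2; nlinarith
    obtain ⟨P, Q, hpell, hQ⟩ := pell_exists n
    obtain ⟨W, hW⟩ := Polynomial.X_sub_C_dvd_sub_C_eval (a := (1:ℝ)) (p := Q)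
    rw [hQ] at hW
    refine ⟨mk9 (C a⁻¹) (C (n:ℝ)) P Q W (C (Real.sqrt (a - n))) (C (Real.sqrt (a - n))⁻¹)
      (C (Real.sqrt (1 - (a - n)))) (C (Real.sqrt (1 - (a - n)))⁻¹), fun j => ?_⟩
    fin_cases j <;>
      simp only [mk7, mk9, map_sub, map_mul, map_add, map_pow, map_one,
        MvPolynomial.eval_X, MvPolynomial.eval_C, Sum.elim_inl, Sum.elim_inr, Fin.isValue]
    · rw [← Polynomial.C_mul, mul_inv_cancel₀ ha0]; simp
    · linear_combination hpell
    · rw [Polynomial.C_1] at hW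
      linear_combination hW
    · have h' : (C (Real.sqrt (a - n)))^2 = C a - C ((n:ℤ):ℝ) := by
        rw [← map_pow, hs1, map_sub]
      linear_combination -h'
    · rw [← map_mul, mul_inv_cancel₀ hs1', map_one, sub_self]
    · have h' : (C (Real.sqrt (1 - (a - n))))^2 = 1 - (C a - C ((n:ℤ):ℝ)) := by
        rw [← map_pow, hs2, map_sub, map_sub, map_one]
      linear_combination -h'
    · rw [← map_mul, mul_inv_cancel₀ hs2', map_one, sub_self]
  · rintro ⟨b, hb⟩
    have h0 := hb 0
    have h1 := hb 1
    have h2 := hb 2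
    have h3 := hb 3
    have h4 := hb 4
    have h5 := hb 5
    have h6 := hb 6
    simp only [mk7, map_sub, map_mul, map_add, map_pow, map_one,
      MvPolynomial.eval_X, MvPolynomial.eval_C, Sum.elim_inl, Sum.elim_inr, Fin.isValue]
      at h0 h1 h2 h3 h4 h5 h6
    obtain ⟨a, rfl⟩ : ∃ a, f = C a := by
      rcases mul_eq_zero.mp h0 with h | h
      · exact ⟨0, by simp [h]⟩
      · obtain ⟨r, -, hr⟩ := Polynomial.isUnit_iff.mp
          (IsUnit.of_mul_eq_one _ (sub_eq_zero.mp h))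
        exact ⟨r, hr.symm⟩
    obtain ⟨n, hn⟩ := pell_main (b 3) (b 2) (by linear_combination h1)
    have e2 : (b 3).eval 1 - (b 1).eval 1 = 0 := by
      simpa using congrArg (Polynomial.eval 1) h2
    have e3 : a - (b 1).eval 1 - ((b 5).eval 1)^2 = 0 := by
      simpa using congrArg (Polynomial.eval 1) h3
    have e4 : (b 5).eval 1 * (b 6).eval 1 = 1 := by
      have h' := congrArg (Polynomial.eval 1) h4
      simp at h'
      linarith [h']
    have e5 : 1 - (a - (b 1).eval 1) - ((b 7).eval 1)^2 = 0 := by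
      simpa using congrArg (Polynomial.eval 1) h5
    have e6 : (b 7).eval 1 * (b 8).eval 1 = 1 := by
      have h' := congrArg (Polynomial.eval 1) h6
      simp at h'
      linarith [h']
    have hσ : (b 5).eval 1 ≠ 0 := left_ne_zero_of_mul_eq_one e4
    have hτ : (b 7).eval 1 ≠ 0 := left_ne_zero_of_mul_eq_one e6
    have hσ2 : ((b 5).eval 1)^2 > 0 := by positivity
    have hτ2 : ((b 7).eval 1)^2 > 0 := by positivity
    refine ⟨a, rfl, ?_⟩
    rintro ⟨m, rfl⟩
    have hb1 : (b 1).eval 1 = n := by rw [← hn]; linarith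
    rw [hb1] at e3 e5
    have h1' : (n : ℝ) < m := by nlinarith
    have h2' : (m : ℝ) < n + 1 := by nlinarith
    have hi1 : n < m := by exact_mod_cast h1'
    have hi2 : (m:ℝ) < ((n + 1 : ℤ) : ℝ) := by push_cast; linarith
    have hi2' : m < n + 1 := by exact_mod_cast hi2
    omega

end Aux

/-- The set `ℝ − ℤ`, regarded as a set of constant polynomials in `ℝ[z]`,
is Diophantine over `ℝ[z]`. -/
theorem real_sub_int_diophantine :
    IsDiophantine1
      {f : Polynomial ℝ | ∃ a : ℝ, f = Polynomial.C a ∧ ¬ ∃ n : ℤ, a = (n : ℝ)} := by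
  exact real_sub_int_diophantine'
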